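/- Let M be the structure whose domain is the set of pairs (m,n) ∈ ℕ × ℤ such that m = 0 implies n ≥ 0, with zero element (0,0), successor s((m,n)) = (m, n+1), predecessor p((m,n)) = (m, n−1) if m ≠ 0 and (0, max(n−1,0)) if m = 0, and addition (m₁,n₁) + (m₂,n₂) = (m₁+m₂, n₁+n₂). Then M satisfies: s(0) ≠ 0, p(0) = 0, p(s(x)) = x, x + 0 = x, x + s(y) = s(x + y), x = 0 ∨ x = s(p(x)), commutativity and associativity of +, and cancellation x + y = x + z → y = z. -/

import Mathlib

namespace Stmt0

/-- Domain of the structure `M`: pairs `(m,n) ∈ ℕ × ℤ` with `m = 0 → n ≥ 0`. -/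
def D : Type := {x : ℕ × ℤ // x.1 = 0 → 0 ≤ x.2}

def zero : D := ⟨(0, 0), fun _ => le_refl 0⟩

def succ (a : D) : D := ⟨(a.1.1, a.1.2 + 1), fun h => by have := a.2 h; omega⟩

def pred (a : D) : D :=
  if h : a.1.1 = 0 then ⟨(0, max (a.1.2 - 1) 0), fun _ => le_max_right _ _⟩
  else ⟨(a.1.1, a.1.2 - 1), fun h0 => absurd h0 h⟩

def add (a b : D) : D :=
  ⟨(a.1.1 + b.1.1, a.1.2 + b.1.2), fun h => by
    have h1 := a.2 (by omega)
    have h2 := b.2 (by omega)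
    omega⟩

theorem stmt0 :
    succ zero ≠ zero ∧
    pred zero = zero ∧
    (∀ x, pred (succ x) = x) ∧
    (∀ x, add x zero = x) ∧
    (∀ x y, add x (succ y) = succ (add x y)) ∧
    (∀ x, x = zero ∨ x = succ (pred x)) ∧
    (∀ x y, add x y = add y x) ∧
    (∀ x y z, add x (add y z) = add (add x y) z) ∧
    (∀ x y z, add x y = add x z → y = z) := by
  refine ⟨?_, ?_, ?_, ?_, ?_, ?_, ?_, ?_, ?_⟩
  · intro h
    have := congrArg (fun a : D => a.1.2) h
    simp [succ, zero] at this
  · simp [pred, zero, Subtype.ext_iff]; rfl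
  · intro x
    apply Subtype.ext
    by_cases h : x.1.1 = 0
    · have := x.2 h
      simp [pred, succ, h, Prod.ext_iff]
      omega
    · simp [pred, succ, h]
  · intro x; apply Subtype.ext; simp [add, zero]
  · intro x y; apply Subtype.ext; simp [add, succ, Prod.ext_iff]; ring
  · intro x
    by_cases h : x.1.1 = 0
    · have hx := x.2 h
      by_cases h2 : x.1.2 = 0
      · left; apply Subtype.ext; rw [Prod.ext_iff]; exact ⟨h, h2⟩
      · right; apply Subtype.ext; simp [succ, pred, h, Prod.ext_iff]; omega
    · right; apply Subtype.ext; simp [succ, pred, h]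
  · intro x y; apply Subtype.ext; simp [add, Prod.ext_iff]; omega
  · intro x y z; apply Subtype.ext; simp [add, Prod.ext_iff]; omega
  · intro x y z h
    have := congrArg (fun a : D => a.1) h
    simp [add, Prod.ext_iff] at this
    apply Subtype.ext; rw [Prod.ext_iff]; omega

end Stmt0
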